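/- Fix η > 0, T > 0, A ∈ ℝ^{n×m} and h0 ∈ ℝ^m. The supremum of R_cont(x, h0, T) over all measurable continuous-time strategies x : [0,T] → Δ_n equals max_{x ∈ Δ_n} (1/η)·[ ln( Σ_{i=1}^m exp(η·h0_i) ) − ln( Σ_{i=1}^m exp( η·( h0_i − T·e_i^⊤ A^⊤ x ) ) ) ], and this supremum is attained by the constant strategy x(t) = x* for all t ∈ [0,T], where x* ∈ Δ_n is any maximizer of the above expression. -/

import Mathlib

open MeasureTheory

/-- Componentwise cumulative play of a continuous-time strategy: `∫_0^t x(s) ds`. -/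
noncomputable def cumX {n : ℕ} (x : ℝ → Fin n → ℝ) (t : ℝ) (k : Fin n) : ℝ :=
  ∫ s in (0:ℝ)..t, x s k

/-- The Replicator Dynamics learner's mixed strategy at time `t`. -/
noncomputable def contPlay {n m : ℕ} (η : ℝ) (A : Matrix (Fin n) (Fin m) ℝ)
    (h0 : Fin m → ℝ) (x : ℝ → Fin n → ℝ) (t : ℝ) (i : Fin m) : ℝ :=
  Real.exp (η * (h0 i - ∑ k, cumX x t k * A k i)) /
    ∑ j, Real.exp (η * (h0 j - ∑ k, cumX x t k * A k j))

/-- The optimizer's continuous-time reward against the Replicator Dynamics. -/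
noncomputable def Rcont {n m : ℕ} (η : ℝ) (A : Matrix (Fin n) (Fin m) ℝ)
    (h0 : Fin m → ℝ) (T : ℝ) (x : ℝ → Fin n → ℝ) : ℝ :=
  ∫ t in (0:ℝ)..T, ∑ k, ∑ i, x t k * A k i * contPlay η A h0 x t i

/-- The closed-form expression
`(1/η)·[ln(Σ exp(η h0_i)) − ln(Σ exp(η(h0_i − T·e_iᵀAᵀx)))]` evaluated at a point
`x` of the simplex. -/
noncomputable def Fclosed {n m : ℕ} (η T : ℝ) (A : Matrix (Fin n) (Fin m) ℝ)
    (h0 : Fin m → ℝ) (x : Fin n → ℝ) : ℝ :=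
  (1/η) * (Real.log (∑ i, Real.exp (η * h0 i)) -
    Real.log (∑ i, Real.exp (η * (h0 i - T * ∑ k, x k * A k i))))


open Set Filter Function intervalIntegral
open scoped Topology ENNReal Interval

theorem sub_le_integral_dini {g φ : ℝ → ℝ} {a b : ℝ} (hab : a ≤ b)
    (hcont : ContinuousOn g (Icc a b))
    (hslope : ∀ t ∈ Ico a b, ∀ y : ℝ, φ t < y → ∀ᶠ u in 𝓝[>] t, g u - g t ≤ (u - t) * y)
    (φint : IntegrableOn φ (Icc a b)) :
    g b - g a ≤ ∫ y in a..b, φ y := by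
  refine le_of_forall_pos_le_add fun ε εpos => ?_
  rcases exists_lt_lowerSemicontinuous_integral_lt φ φint εpos with
    ⟨G', f_lt_G', G'cont, G'int, G'lt_top, hG'⟩
  set s := {t | g t - g a ≤ ∫ u in a..t, (G' u).toReal} ∩ Icc a b
  have s_closed : IsClosed s := by
    have : ContinuousOn (fun t => (g t - g a, ∫ u in a..t, (G' u).toReal)) (Icc a b) := by
      rw [← uIcc_of_le hab] at G'int hcont ⊢
      exact (hcont.sub continuousOn_const).prodMk (continuousOn_primitive_interval G'int)
    simp only [s, inter_comm]
    exact this.preimage_isClosed_of_isClosed isClosed_Icc OrderClosedTopology.isClosed_le'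
  have main : Icc a b ⊆ {t | g t - g a ≤ ∫ u in a..t, (G' u).toReal} := by
    refine s_closed.Icc_subset_of_forall_exists_gt
      (by simp only [integral_same, mem_setOf_eq, sub_self, le_rfl]) fun t ht v t_lt_v => ?_
    obtain ⟨y, φ_lt_y', y_lt_G'⟩ : ∃ y : ℝ, (φ t : EReal) < y ∧ (y : EReal) < G' t :=
      EReal.lt_iff_exists_real_btwn.1 (f_lt_G' t)
    have I1 : ∀ᶠ u in 𝓝[>] t, (u - t) * y ≤ ∫ w in t..u, (G' w).toReal := by
      have B : ∀ᶠ u in 𝓝 t, (y : EReal) < G' u := G'cont.lowerSemicontinuousAt _ _ y_lt_G'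
      rcases mem_nhds_iff_exists_Ioo_subset.1 B with ⟨m, M, ⟨hm, hM⟩, H⟩
      have : Ioo t (min M b) ∈ 𝓝[>] t := Ioo_mem_nhdsGT (lt_min hM ht.2.2)
      filter_upwards [this] with u hu
      have I : Icc t u ⊆ Icc a b := Icc_subset_Icc ht.2.1 (hu.2.le.trans (min_le_right _ _))
      calc
        (u - t) * y = ∫ _ in Icc t u, y := by
          simp only [hu.left.le, MeasureTheory.integral_const, smul_eq_mul, Measure.real, sub_nonneg,
            MeasurableSet.univ, Real.volume_Icc, Measure.restrict_apply, univ_inter,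
            ENNReal.toReal_ofReal]
        _ ≤ ∫ w in t..u, (G' w).toReal := by
          rw [intervalIntegral.integral_of_le hu.1.le, ← integral_Icc_eq_integral_Ioc]
          apply setIntegral_mono_ae_restrict
          · exact integrableOn_const (by simp [Real.volume_Icc])
          · exact IntegrableOn.mono_set G'int I
          · have C1 : ∀ᵐ x : ℝ ∂volume.restrict (Icc t u), G' x < ∞ :=
              ae_mono (Measure.restrict_mono I le_rfl) G'lt_top
            have C2 : ∀ᵐ x : ℝ ∂volume.restrict (Icc t u), x ∈ Icc t u :=
              ae_restrict_mem measurableSet_Icc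
            filter_upwards [C1, C2] with x G'x hx
            apply EReal.coe_le_coe_iff.1
            have : x ∈ Ioo m M := by
              simp only [hm.trans_le hx.left,
                (hx.right.trans_lt hu.right).trans_le (min_le_left M b), mem_Ioo, and_self_iff]
            refine (H this).out.le.trans_eq ?_
            exact (EReal.coe_toReal G'x.ne (f_lt_G' x).ne_bot).symm
    have I2 : ∀ᶠ u in 𝓝[>] t, g u - g t ≤ (u - t) * y :=
      hslope t ⟨ht.2.1, ht.2.2⟩ y (EReal.coe_lt_coe_iff.1 φ_lt_y')
    have I3 : ∀ᶠ u in 𝓝[>] t, g u - g t ≤ ∫ w in t..u, (G' w).toReal := by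
      filter_upwards [I1, I2] with u hu1 hu2 using hu2.trans hu1
    have I4 : ∀ᶠ u in 𝓝[>] t, u ∈ Ioc t (min v b) := by
      refine mem_nhdsGT_iff_exists_Ioc_subset.2 ⟨min v b, ?_, Subset.rfl⟩
      simp only [lt_min_iff, mem_Ioi]
      exact ⟨t_lt_v, ht.2.2⟩
    rcases (I3.and I4).exists with ⟨x, hx, h'x⟩
    refine ⟨x, ?_, Ioc_subset_Ioc le_rfl (min_le_left _ _) h'x⟩
    calc
      g x - g a = g t - g a + (g x - g t) := by abel
      _ ≤ (∫ w in a..t, (G' w).toReal) + ∫ w in t..x, (G' w).toReal := add_le_add ht.1 hx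
      _ = ∫ w in a..x, (G' w).toReal := by
        apply integral_add_adjacent_intervals
        · rw [intervalIntegrable_iff_integrableOn_Ioc_of_le ht.2.1]
          exact IntegrableOn.mono_set G'int
            (Ioc_subset_Icc_self.trans (Icc_subset_Icc le_rfl ht.2.2.le))
        · rw [intervalIntegrable_iff_integrableOn_Ioc_of_le h'x.1.le]
          apply IntegrableOn.mono_set G'int
          exact Ioc_subset_Icc_self.trans (Icc_subset_Icc ht.2.1 (h'x.2.trans (min_le_right _ _)))
  calc
    g b - g a ≤ ∫ y in a..b, (G' y).toReal := main (right_mem_Icc.2 hab)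
    _ ≤ (∫ y in a..b, φ y) + ε := by
      refine le_trans (le_of_eq ?_) (hG'.le.trans (le_of_eq ?_)) <;>
        · rw [intervalIntegral.integral_of_le hab]
          simp only [integral_Icc_eq_integral_Ioc', Real.volume_singleton]

lemma sum_exp_pos' {m : ℕ} (hm : 0 < m) (f : Fin m → ℝ) : 0 < ∑ j, Real.exp (f j) := by
  have : Nonempty (Fin m) := Fin.pos_iff_nonempty.1 hm
  exact Finset.sum_pos (fun j _ => Real.exp_pos _) Finset.univ_nonempty

lemma exp_inner_le {m : ℕ} (y d : Fin m → ℝ) (hy0 : ∀ j, 0 ≤ y j) (hy1 : ∑ j, y j = 1) :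
    Real.exp (∑ j, y j * d j) ≤ ∑ j, y j * Real.exp (d j) := by
  simpa [smul_eq_mul] using
    convexOn_exp.map_sum_le (t := Finset.univ) (p := d) (fun i _ => hy0 i) hy1
      (fun i _ => Set.mem_univ _)

lemma sum_exp_pos {m : ℕ} (hm : 0 < m) (f : Fin m → ℝ) : 0 < ∑ j, Real.exp (f j) := by
  have : Nonempty (Fin m) := Fin.pos_iff_nonempty.1 hm
  exact Finset.sum_pos (fun j _ => Real.exp_pos _) Finset.univ_nonempty

lemma key_slope {m : ℕ} (hm : 0 < m) (η : ℝ) (hη : 0 < η) (h0 cu ct : Fin m → ℝ) :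
    ∑ j, (cu j - ct j) * (Real.exp (η * (h0 j - cu j)) / ∑ l, Real.exp (η * (h0 l - cu l)))
      ≤ (-(1/η) * Real.log (∑ j, Real.exp (η * (h0 j - cu j))))
        - (-(1/η) * Real.log (∑ j, Real.exp (η * (h0 j - ct j)))) := by
  set Su := ∑ l, Real.exp (η * (h0 l - cu l)) with hSu
  set St := ∑ l, Real.exp (η * (h0 l - ct l)) with hSt
  have hSupos : 0 < Su := sum_exp_pos hm _
  have hStpos : 0 < St := sum_exp_pos hm _
  set y : Fin m → ℝ := fun j => Real.exp (η * (h0 j - cu j)) / Su with hy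
  have hy0 : ∀ j, 0 ≤ y j := fun j => div_nonneg (Real.exp_pos _).le hSupos.le
  have hy1 : ∑ j, y j = 1 := by
    rw [hy, ← Finset.sum_div, ← hSu, div_self hSupos.ne']
  have hexp : Real.exp (∑ j, y j * (η * (cu j - ct j))) ≤ ∑ j, y j * Real.exp (η * (cu j - ct j)) :=
    exp_inner_le y _ hy0 hy1
  have hconv : ∑ j, y j * Real.exp (η * (cu j - ct j)) = St / Su := by
    rw [hSt, Finset.sum_div]
    refine Finset.sum_congr rfl fun j _ => ?_
    rw [hy]
    rw [div_mul_eq_mul_div, ← Real.exp_add]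
    ring_nf
  have hlog : ∑ j, y j * (η * (cu j - ct j)) ≤ Real.log St - Real.log Su := by
    have h1 : Real.exp (∑ j, y j * (η * (cu j - ct j))) ≤ St / Su := hconv ▸ hexp
    have := Real.log_le_log (Real.exp_pos _) h1
    rwa [Real.log_exp, Real.log_div hStpos.ne' hSupos.ne'] at this
  have : ∑ j, y j * (η * (cu j - ct j)) = η * ∑ j, (cu j - ct j) * y j := by
    rw [Finset.mul_sum]; exact Finset.sum_congr rfl fun j _ => by ring
  rw [this] at hlog
  have h2 : ∑ j, (cu j - ct j) * y j ≤ (1/η) * (Real.log St - Real.log Su) := by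
    rw [← sub_nonneg] at hlog ⊢
    have : (1/η) * (Real.log St - Real.log Su) - ∑ j, (cu j - ct j) * y j
        = (1/η) * ((Real.log St - Real.log Su) - η * ∑ j, (cu j - ct j) * y j) := by
      field_simp
    rw [this]
    exact mul_nonneg (by positivity) (by linarith)
  calc ∑ j, (cu j - ct j) * y j ≤ (1/η) * (Real.log St - Real.log Su) := h2
    _ = (-(1/η) * Real.log Su) - (-(1/η) * Real.log St) := by ring

/-- auxiliary: cumulative payoff vector -/
noncomputable def cC {n m : ℕ} (A : Matrix (Fin n) (Fin m) ℝ) (x : ℝ → Fin n → ℝ)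
    (t : ℝ) (j : Fin m) : ℝ := ∑ k, cumX x t k * A k j

/-- auxiliary: partition function -/
noncomputable def sS {n m : ℕ} (η : ℝ) (A : Matrix (Fin n) (Fin m) ℝ) (h0 : Fin m → ℝ)
    (x : ℝ → Fin n → ℝ) (t : ℝ) : ℝ := ∑ j, Real.exp (η * (h0 j - cC A x t j))

/-- auxiliary: potential function -/
noncomputable def gG {n m : ℕ} (η : ℝ) (A : Matrix (Fin n) (Fin m) ℝ) (h0 : Fin m → ℝ)
    (x : ℝ → Fin n → ℝ) (t : ℝ) : ℝ := -(1/η) * Real.log (sS η A h0 x t)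

/-- auxiliary: instantaneous payoff vector -/
noncomputable def vV {n m : ℕ} (A : Matrix (Fin n) (Fin m) ℝ) (x : ℝ → Fin n → ℝ)
    (s : ℝ) (j : Fin m) : ℝ := ∑ k, x s k * A k j

/-- auxiliary: instantaneous reward -/
noncomputable def iI {n m : ℕ} (η : ℝ) (A : Matrix (Fin n) (Fin m) ℝ) (h0 : Fin m → ℝ)
    (x : ℝ → Fin n → ℝ) (t : ℝ) : ℝ := ∑ i, vV A x t i * contPlay η A h0 x t i


lemma upper_bound {n m : ℕ} (hm : 0 < m) (η T : ℝ) (hη : 0 < η) (hT : 0 < T)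
    (A : Matrix (Fin n) (Fin m) ℝ) (h0 : Fin m → ℝ)
    (x : ℝ → Fin n → ℝ) (hx : Measurable x)
    (hsim : ∀ t ∈ Set.Icc (0:ℝ) T, x t ∈ stdSimplex ℝ (Fin n)) :
    ∃ z ∈ stdSimplex ℝ (Fin n), Rcont η A h0 T x ≤ Fclosed η T A h0 z := by
  classical
  -- basic bounds on x
  have hx01 : ∀ s ∈ Icc (0:ℝ) T, ∀ k, 0 ≤ x s k ∧ x s k ≤ 1 := by
    intro s hs k
    obtain ⟨h1, h2⟩ := hsim s hs
    refine ⟨h1 k, ?_⟩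
    calc x s k ≤ ∑ l, x s l := Finset.single_le_sum (fun l _ => h1 l) (Finset.mem_univ k)
      _ = 1 := h2
  have hxkmeas : ∀ k, Measurable fun s => x s k := fun k => (measurable_pi_apply k).comp hx
  have hxIcc : ∀ k, IntegrableOn (fun s => x s k) (Icc 0 T) := by
    intro k
    refine Integrable.mono' (integrable_const 1) ((hxkmeas k).aestronglyMeasurable) ?_
    filter_upwards [ae_restrict_mem measurableSet_Icc] with s hs
    rw [Real.norm_eq_abs, abs_of_nonneg (hx01 s hs k).1]
    exact (hx01 s hs k).2
  have hIntAB : ∀ (k : Fin n) (a b : ℝ), a ∈ Icc (0:ℝ) T → b ∈ Icc (0:ℝ) T →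
      IntervalIntegrable (fun s => x s k) volume a b := by
    intro k a b ha hb
    apply IntegrableOn.intervalIntegrable
    apply (hxIcc k).mono_set
    rw [← uIcc_of_le hT.le]
    exact uIcc_subset_uIcc (by rwa [uIcc_of_le hT.le]) (by rwa [uIcc_of_le hT.le])
  -- the bound B
  set B : ℝ := ∑ j, ∑ k, |A k j| with hB
  have hBnn : 0 ≤ B := Finset.sum_nonneg fun j _ => Finset.sum_nonneg fun k _ => abs_nonneg _
  have hvB : ∀ s ∈ Icc (0:ℝ) T, ∀ j, |vV A x s j| ≤ B := by
    intro s hs j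
    calc |vV A x s j| ≤ ∑ k, |x s k * A k j| := Finset.abs_sum_le_sum_abs _ _
      _ ≤ ∑ k, |A k j| := by
          refine Finset.sum_le_sum fun k _ => ?_
          rw [abs_mul, abs_of_nonneg (hx01 s hs k).1]
          exact mul_le_of_le_one_left (abs_nonneg _) (hx01 s hs k).2
      _ ≤ B := Finset.single_le_sum
          (f := fun j => ∑ k, |A k j|)
          (fun j _ => Finset.sum_nonneg fun k _ => abs_nonneg _) (Finset.mem_univ j)
  have hvmeas : ∀ j, Measurable fun s => vV A x s j := by
    intro j
    exact Finset.measurable_sum _ fun k _ => (hxkmeas k).mul_const _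
  have hvIcc : ∀ j, IntegrableOn (fun s => vV A x s j) (Icc 0 T) := by
    intro j
    refine Integrable.mono' (integrable_const B) ((hvmeas j).aestronglyMeasurable) ?_
    filter_upwards [ae_restrict_mem measurableSet_Icc] with s hs
    rw [Real.norm_eq_abs]; exact hvB s hs j
  have hvIntAB : ∀ (j : Fin m) (a b : ℝ), a ∈ Icc (0:ℝ) T → b ∈ Icc (0:ℝ) T →
      IntervalIntegrable (fun s => vV A x s j) volume a b := by
    intro j a b ha hb
    apply IntegrableOn.intervalIntegrable
    apply (hvIcc j).mono_set
    rw [← uIcc_of_le hT.le]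
    exact uIcc_subset_uIcc (by rwa [uIcc_of_le hT.le]) (by rwa [uIcc_of_le hT.le])
  -- c as an integral of v
  have hcint : ∀ (j : Fin m), ∀ t ∈ Icc (0:ℝ) T, cC A x t j = ∫ s in (0:ℝ)..t, vV A x s j := by
    intro j t ht
    unfold cC vV
    rw [intervalIntegral.integral_finset_sum
      (fun k _ => (hIntAB k 0 t (left_mem_Icc.2 hT.le) ht).mul_const _)]
    exact Finset.sum_congr rfl fun k _ => by rw [cumX, ← intervalIntegral.integral_mul_const]
  have hcdiff : ∀ (j : Fin m), ∀ t ∈ Icc (0:ℝ) T, ∀ u ∈ Icc (0:ℝ) T,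
      cC A x u j - cC A x t j = ∫ s in t..u, vV A x s j := by
    intro j t ht u hu
    rw [hcint j t ht, hcint j u hu]
    exact intervalIntegral.integral_interval_sub_left
      (hvIntAB j 0 u (left_mem_Icc.2 hT.le) hu) (hvIntAB j 0 t (left_mem_Icc.2 hT.le) ht)
  -- continuity
  have hcumcont : ∀ k, ContinuousOn (fun t => cumX x t k) (Icc 0 T) := by
    intro k
    have := intervalIntegral.continuousOn_primitive_interval
      (a := 0) (b := T) (μ := volume) (f := fun s => x s k) (by rw [uIcc_of_le hT.le]; exact hxIcc k)
    rw [uIcc_of_le hT.le] at this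
    exact this
  have hccont : ∀ j, ContinuousOn (fun t => cC A x t j) (Icc 0 T) := by
    intro j
    unfold cC
    exact continuousOn_finset_sum _ fun k _ => (hcumcont k).mul continuousOn_const
  have hSpos : ∀ t, 0 < sS η A h0 x t := fun t => sum_exp_pos' hm _
  have hScont : ContinuousOn (fun t => sS η A h0 x t) (Icc 0 T) := by
    unfold sS
    exact continuousOn_finset_sum _ fun j _ =>
      (Real.continuous_exp.comp_continuousOn
        (continuousOn_const.mul (continuousOn_const.sub (hccont j))))
  have hgcont : ContinuousOn (fun t => gG η A h0 x t) (Icc 0 T) := by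
    unfold gG
    exact continuousOn_const.mul (hScont.log fun t _ => (hSpos t).ne')
  have hycont : ∀ i, ContinuousOn (fun t => contPlay η A h0 x t i) (Icc 0 T) := by
    intro i
    have : ∀ t, contPlay η A h0 x t i
        = Real.exp (η * (h0 i - cC A x t i)) / sS η A h0 x t := fun t => rfl
    simp only [this]
    exact ((Real.continuous_exp.comp_continuousOn
        (continuousOn_const.mul (continuousOn_const.sub (hccont i))))).div hScont
      fun t _ => (hSpos t).ne'
  have hy0 : ∀ t i, 0 ≤ contPlay η A h0 x t i :=
    fun t i => div_nonneg (Real.exp_pos _).le (hSpos t).le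
  have hy1 : ∀ t, ∑ i, contPlay η A h0 x t i = 1 := by
    intro t
    have : ∀ i, contPlay η A h0 x t i
        = Real.exp (η * (h0 i - cC A x t i)) / sS η A h0 x t := fun i => rfl
    simp only [this]
    rw [← Finset.sum_div]
    exact div_self (hSpos t).ne'
  -- key slope inequality
  have hslopekey : ∀ t ∈ Icc (0:ℝ) T, ∀ u ∈ Icc (0:ℝ) T,
      ∑ j, (cC A x u j - cC A x t j) * contPlay η A h0 x u j
        ≤ gG η A h0 x u - gG η A h0 x t := by
    intro t ht u hu
    exact key_slope hm η hη h0 (fun j => cC A x u j) (fun j => cC A x t j)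
  -- lower bound on the increment
  have hlower : ∀ t ∈ Icc (0:ℝ) T, ∀ u ∈ Icc (0:ℝ) T, t ≤ u →
      -B * (u - t) ≤ ∑ j, (cC A x u j - cC A x t j) * contPlay η A h0 x u j := by
    intro t ht u hu htu
    have hd : ∀ j, -B * (u - t) ≤ cC A x u j - cC A x t j := by
      intro j
      rw [hcdiff j t ht u hu]
      have : -B * (u - t) = ∫ s in t..u, (-B : ℝ) := by
        rw [intervalIntegral.integral_const, smul_eq_mul]; ring
      rw [this]
      apply intervalIntegral.integral_mono_on htu (intervalIntegrable_const)
        (hvIntAB j t u ht hu)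
      intro s hs
      have hsIcc : s ∈ Icc (0:ℝ) T := ⟨ht.1.trans hs.1, hs.2.trans hu.2⟩
      have := (abs_le.1 (hvB s hsIcc j)).1
      linarith
    calc -B * (u - t) = ∑ j, (-B * (u - t)) * contPlay η A h0 x u j := by
          rw [← Finset.mul_sum, hy1, mul_one]
        _ ≤ ∑ j, (cC A x u j - cC A x t j) * contPlay η A h0 x u j :=
          Finset.sum_le_sum fun j _ => mul_le_mul_of_nonneg_right (hd j) (hy0 u j)
  -- truncated v, locally integrable
  set vb : ℝ → Fin m → ℝ := fun s j => if s ∈ Icc (0:ℝ) T then vV A x s j else 0 with hvb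
  have hvbmeas : ∀ j, Measurable fun s => vb s j := by
    intro j
    exact Measurable.ite measurableSet_Icc (hvmeas j) measurable_const
  have hvbint : ∀ j, Integrable (fun s => vb s j) volume := by
    intro j
    have heq : (fun s => vb s j) = (Icc (0:ℝ) T).indicator (fun s => vV A x s j) := by
      funext s
      by_cases h : s ∈ Icc (0:ℝ) T
      · rw [hvb]; dsimp only; rw [if_pos h, Set.indicator_of_mem h]
      · rw [hvb]; dsimp only; rw [if_neg h, Set.indicator_of_notMem h]
    rw [heq, integrable_indicator_iff measurableSet_Icc]
    exact hvIcc j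
  have hae : ∀ᵐ t : ℝ, ∀ j, Tendsto (fun u => ⨍ s in Icc t u, vb s j) (𝓝[>] t) (𝓝 (vb t j)) := by
    rw [ae_all_iff]
    intro j
    filter_upwards [IsUnifLocDoublingMeasure.ae_tendsto_average (μ := volume)
      ((hvbint j).locallyIntegrable) 1] with t ht
    have hδ : Tendsto (fun u : ℝ => (u - t)/2) (𝓝[>] t) (𝓝[>] (0:ℝ)) := by
      apply tendsto_nhdsWithin_of_tendsto_nhds_of_eventually_within
      · have h0' : Tendsto (fun u : ℝ => (u - t)/2) (𝓝[>] t) (𝓝 ((t - t)/2)) :=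
          (((continuous_id.sub continuous_const).div_const 2).tendsto t).mono_left
            nhdsWithin_le_nhds
        simpa using h0'
      · filter_upwards [self_mem_nhdsWithin] with u hu
        have : (t : ℝ) < u := hu
        simp only [Set.mem_Ioi]
        linarith
    have hball : ∀ᶠ u in 𝓝[>] t, t ∈ Metric.closedBall ((t+u)/2) (1 * ((u - t)/2)) := by
      filter_upwards [self_mem_nhdsWithin] with u hu
      have : (t : ℝ) < u := hu
      rw [Metric.mem_closedBall, Real.dist_eq, one_mul]
      rw [abs_of_nonpos (by linarith)]
      linarith
    have h2 := ht (fun u => (t+u)/2) (fun u => (u - t)/2) hδ hball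
    refine h2.congr' ?_
    filter_upwards [self_mem_nhdsWithin] with u hu
    have : (t : ℝ) < u := hu
    congr 1
    rw [Real.closedBall_eq_Icc]
    congr 1 <;> ring
  -- the bad set
  set Bad : Set ℝ :=
    {t | ¬ ∀ j, Tendsto (fun u => ⨍ s in Icc t u, vb s j) (𝓝[>] t) (𝓝 (vb t j))} with hBadDef
  have hBad0 : volume Bad = 0 := by
    have := ae_iff.mp hae
    exact this
  set N : Set ℝ := toMeasurable volume Bad with hNdef
  have hNmeas : MeasurableSet N := measurableSet_toMeasurable _ _
  have hN0 : volume N = 0 := by rw [hNdef, measure_toMeasurable]; exact hBad0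
  -- good-point convergence
  have hgood : ∀ t ∈ Ico (0:ℝ) T, t ∉ N →
      Tendsto (fun u => ∑ j, ((cC A x u j - cC A x t j)/(u - t)) * contPlay η A h0 x u j)
        (𝓝[>] t) (𝓝 (iI η A h0 x t)) := by
    intro t ht htN
    have htIcc : t ∈ Icc (0:ℝ) T := ⟨ht.1, ht.2.le⟩
    have hP : ∀ j, Tendsto (fun u => ⨍ s in Icc t u, vb s j) (𝓝[>] t) (𝓝 (vb t j)) := by
      by_contra h
      exact htN (subset_toMeasurable _ _ h)
    have hIoc : Ioc t T ∈ 𝓝[>] t := Ioc_mem_nhdsGT ht.2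
    have htarget : iI η A h0 x t = ∑ j, vV A x t j * contPlay η A h0 x t j := rfl
    rw [htarget]
    apply tendsto_finset_sum
    intro j _
    have h1 : Tendsto (fun u => (cC A x u j - cC A x t j)/(u - t)) (𝓝[>] t) (𝓝 (vV A x t j)) := by
      have hvbt : vb t j = vV A x t j := by rw [hvb]; simp [htIcc]
      refine Tendsto.congr' ?_ (hvbt ▸ hP j)
      filter_upwards [hIoc] with u hu
      have hult : t < u := hu.1
      have huIcc : u ∈ Icc (0:ℝ) T := ⟨ht.1.trans hult.le, hu.2⟩
      have hsub : Icc t u ⊆ Icc (0:ℝ) T := fun s hs => ⟨ht.1.trans hs.1, hs.2.trans hu.2⟩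
      rw [MeasureTheory.setAverage_eq]
      have hvol : (volume (Icc t u)).toReal = u - t := by
        rw [Real.volume_Icc, ENNReal.toReal_ofReal (by linarith)]
      rw [measureReal_def, hvol]
      have hint1 : ∫ s in Icc t u, vb s j = ∫ s in Icc t u, vV A x s j := by
        apply setIntegral_congr_fun measurableSet_Icc
        intro s hs
        rw [hvb]
        simp [hsub hs]
      rw [hint1, smul_eq_mul]
      rw [integral_Icc_eq_integral_Ioc, ← intervalIntegral.integral_of_le hult.le,
        ← hcdiff j t htIcc u huIcc]
      rw [div_eq_inv_mul]
    have h2 : Tendsto (fun u => contPlay η A h0 x u j) (𝓝[>] t) (𝓝 (contPlay η A h0 x t j)) := by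
      have hcw : ContinuousWithinAt (fun u => contPlay η A h0 x u j) (Icc 0 T) t :=
        (hycont j) t htIcc
      refine hcw.tendsto.mono_left ?_
      rw [← nhdsWithin_Ioc_eq_nhdsGT ht.2]
      exact nhdsWithin_mono _ fun u hu => ⟨ht.1.trans hu.1.le, hu.2⟩
    exact h1.mul h2
  -- integrability of iI
  have hiIaesm : AEStronglyMeasurable (fun t => iI η A h0 x t) (volume.restrict (Icc 0 T)) := by
    have : ∀ t, iI η A h0 x t = ∑ i, vV A x t i * contPlay η A h0 x t i := fun t => rfl
    simp only [this]
    apply Finset.aestronglyMeasurable_fun_sum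
    intro i _
    exact ((hvmeas i).aestronglyMeasurable).mul
      (((hycont i).aestronglyMeasurable measurableSet_Icc))
  have hiIbound : ∀ t ∈ Icc (0:ℝ) T, |iI η A h0 x t| ≤ B := by
    intro t ht
    have : iI η A h0 x t = ∑ i, vV A x t i * contPlay η A h0 x t i := rfl
    rw [this]
    calc |∑ i, vV A x t i * contPlay η A h0 x t i|
        ≤ ∑ i, |vV A x t i * contPlay η A h0 x t i| := Finset.abs_sum_le_sum_abs _ _
      _ ≤ ∑ i, B * contPlay η A h0 x t i := by
          refine Finset.sum_le_sum fun i _ => ?_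
          rw [abs_mul, abs_of_nonneg (hy0 t i)]
          exact mul_le_mul_of_nonneg_right (hvB t ht i) (hy0 t i)
      _ = B := by rw [← Finset.mul_sum, hy1, mul_one]
  have hiIint : IntegrableOn (fun t => iI η A h0 x t) (Icc 0 T) := by
    refine Integrable.mono' (integrable_const B) hiIaesm ?_
    filter_upwards [ae_restrict_mem measurableSet_Icc] with t ht
    rw [Real.norm_eq_abs]
    exact hiIbound t ht
  -- the comparison function
  set φ : ℝ → ℝ := fun t => if t ∈ N then B else -(iI η A h0 x t) with hφ
  have hφae : ∀ᵐ t : ℝ, φ t = -(iI η A h0 x t) := by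
    have hnm : ∀ᵐ t : ℝ, t ∉ N := by
      rw [← MeasureTheory.measure_eq_zero_iff_ae_notMem] at *
      exact hN0
    filter_upwards [hnm] with t htn
    rw [hφ]; simp [htn]
  have hφint : IntegrableOn φ (Icc 0 T) := by
    apply Integrable.congr hiIint.neg
    exact ae_restrict_of_ae (hφae.mono fun t h => h.symm)
  -- apply the Dini FTC inequality to -g
  have hmain : (-(gG η A h0 x T)) - (-(gG η A h0 x 0)) ≤ ∫ s in (0:ℝ)..T, φ s := by
    apply sub_le_integral_dini hT.le hgcont.neg _ hφint
    intro t ht Y hY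
    have htIcc : t ∈ Icc (0:ℝ) T := ⟨ht.1, ht.2.le⟩
    have hIoc : Ioc t T ∈ 𝓝[>] t := Ioc_mem_nhdsGT ht.2
    by_cases hN : t ∈ N
    · rw [hφ] at hY
      simp only [if_pos hN] at hY
      filter_upwards [hIoc] with u hu
      have hult : t < u := hu.1
      have huIcc : u ∈ Icc (0:ℝ) T := ⟨ht.1.trans hult.le, hu.2⟩
      have hl := hlower t htIcc u huIcc hult.le
      have hk := hslopekey t htIcc u huIcc
      have hBY : (B - Y) * (u - t) ≤ 0 :=
        mul_nonpos_of_nonpos_of_nonneg (by linarith) (by linarith)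
      simp only [Pi.neg_apply]
      nlinarith
    · rw [hφ] at hY
      simp only [if_neg hN] at hY
      have h3 := hgood t ht hN
      have h4 : ∀ᶠ u in 𝓝[>] t,
          -Y < ∑ j, ((cC A x u j - cC A x t j)/(u - t)) * contPlay η A h0 x u j :=
        h3.eventually (eventually_gt_nhds (by linarith))
      filter_upwards [h4, hIoc] with u hZ hu
      have hult : t < u := hu.1
      have huIcc : u ∈ Icc (0:ℝ) T := ⟨ht.1.trans hult.le, hu.2⟩
      have hk := hslopekey t htIcc u huIcc
      have hfact : ∑ j, (cC A x u j - cC A x t j) * contPlay η A h0 x u j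
          = (u - t) * ∑ j, ((cC A x u j - cC A x t j)/(u - t)) * contPlay η A h0 x u j := by
        rw [Finset.mul_sum]
        refine Finset.sum_congr rfl fun j _ => ?_
        have hne : u - t ≠ 0 := by linarith
        field_simp
      rw [hfact] at hk
      have : (u - t) * (-Y) < (u - t) *
          (∑ j, ((cC A x u j - cC A x t j)/(u - t)) * contPlay η A h0 x u j) :=
        mul_lt_mul_of_pos_left hZ (by linarith)
      simp only [Pi.neg_apply]
      nlinarith
  -- convert the integral of φ
  have hφint2 : ∫ s in (0:ℝ)..T, φ s = -∫ s in (0:ℝ)..T, iI η A h0 x s := by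
    rw [← intervalIntegral.integral_neg]
    apply intervalIntegral.integral_congr_ae
    filter_upwards [hφae] with s hs _
    rw [hs]
  have hRI : Rcont η A h0 T x = ∫ s in (0:ℝ)..T, iI η A h0 x s := by
    unfold Rcont
    apply intervalIntegral.integral_congr
    intro t _
    dsimp only
    rw [Finset.sum_comm]
    have : iI η A h0 x t = ∑ i, vV A x t i * contPlay η A h0 x t i := rfl
    rw [this]
    refine Finset.sum_congr rfl fun i _ => ?_
    rw [← Finset.sum_mul]
    rfl
  have hchain : Rcont η A h0 T x ≤ gG η A h0 x T - gG η A h0 x 0 := by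
    rw [hRI]
    rw [hφint2] at hmain
    linarith
  -- the average strategy z
  refine ⟨fun k => cumX x T k / T, ⟨?_, ?_⟩, ?_⟩
  · intro k
    apply div_nonneg _ hT.le
    exact intervalIntegral.integral_nonneg hT.le fun s hs => (hx01 s hs k).1
  · rw [← Finset.sum_div]
    have hsumT : ∑ k, cumX x T k = T := by
      have h1 : ∑ k, cumX x T k = ∫ s in (0:ℝ)..T, ∑ k, x s k := by
        unfold cumX
        rw [intervalIntegral.integral_finset_sum
          (fun k _ => hIntAB k 0 T (left_mem_Icc.2 hT.le) (right_mem_Icc.2 hT.le))]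
      rw [h1]
      have h2 : ∫ s in (0:ℝ)..T, ∑ k, x s k = ∫ s in (0:ℝ)..T, (1:ℝ) := by
        apply intervalIntegral.integral_congr
        intro s hs
        rw [uIcc_of_le hT.le] at hs
        exact (hsim s hs).2
      rw [h2]
      simp
    rw [hsumT, div_self hT.ne']
  · -- Rcont ≤ Fclosed z
    have hgT : gG η A h0 x T - gG η A h0 x 0 = Fclosed η T A h0 (fun k => cumX x T k / T) := by
      have hc0 : ∀ j, cC A x 0 j = 0 := by
        intro j
        unfold cC cumX
        simp
      have hS0 : sS η A h0 x 0 = ∑ j, Real.exp (η * h0 j) := by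
        unfold sS
        exact Finset.sum_congr rfl fun j _ => by rw [hc0 j, sub_zero]
      have hcT : ∀ i, T * ∑ k, (cumX x T k / T) * A k i = cC A x T i := by
        intro i
        unfold cC
        rw [Finset.mul_sum]
        refine Finset.sum_congr rfl fun k _ => ?_
        field_simp
      unfold Fclosed
      have e1 : gG η A h0 x T = -(1/η) * Real.log (sS η A h0 x T) := rfl
      have e2 : gG η A h0 x 0 = -(1/η) * Real.log (sS η A h0 x 0) := rfl
      rw [e1, e2, hS0]
      have e3 : ∑ i, Real.exp (η * (h0 i - T * ∑ k, (cumX x T k / T) * A k i))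
          = sS η A h0 x T := by
        unfold sS
        exact Finset.sum_congr rfl fun i _ => by rw [hcT i]
      rw [e3]
      ring
    rw [← hgT]
    exact hchain


lemma exists_max {n m : ℕ} (hn : 0 < n) (hm : 0 < m) (η T : ℝ) (hη : 0 < η)
    (A : Matrix (Fin n) (Fin m) ℝ) (h0 : Fin m → ℝ) :
    ∃ xs ∈ stdSimplex ℝ (Fin n), ∀ x' ∈ stdSimplex ℝ (Fin n),
      Fclosed η T A h0 x' ≤ Fclosed η T A h0 xs := by
  have hScont : Continuous fun x : Fin n → ℝ =>
      ∑ i, Real.exp (η * (h0 i - T * ∑ k, x k * A k i)) := by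
    apply continuous_finset_sum
    intro i _
    apply Real.continuous_exp.comp
    apply Continuous.mul continuous_const
    apply Continuous.sub continuous_const
    apply Continuous.mul continuous_const
    exact continuous_finset_sum _ fun k _ => (continuous_apply k).mul continuous_const
  have hFcont : Continuous fun x : Fin n → ℝ => Fclosed η T A h0 x := by
    unfold Fclosed
    apply Continuous.mul continuous_const
    apply Continuous.sub continuous_const
    exact hScont.log fun x => (sum_exp_pos' hm _).ne'
  have hne : (stdSimplex ℝ (Fin n)).Nonempty := by
    refine ⟨fun _ => (n : ℝ)⁻¹, fun k => by positivity, ?_⟩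
    simp [Finset.sum_const, Finset.card_univ]
    field_simp
  obtain ⟨xs, hxs, hmax⟩ :=
    (isCompact_stdSimplex ℝ (Fin n)).exists_isMaxOn hne hFcont.continuousOn
  exact ⟨xs, hxs, fun x' hx' => hmax hx'⟩

lemma const_strategy {n m : ℕ} (hm : 0 < m) (η T : ℝ) (hη : 0 < η)
    (A : Matrix (Fin n) (Fin m) ℝ) (h0 : Fin m → ℝ) (xs : Fin n → ℝ) :
    Rcont η A h0 T (fun _ => xs) = Fclosed η T A h0 xs := by
  set a : Fin m → ℝ := fun j => ∑ k, xs k * A k j with ha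
  have hcum : ∀ (t : ℝ) (k : Fin n), cumX (fun _ => xs) t k = t * xs k := by
    intro t k; simp [cumX]
  have hsum : ∀ (t : ℝ) (i : Fin m), ∑ k, cumX (fun _ : ℝ => xs) t k * A k i = t * a i := by
    intro t i
    rw [ha, Finset.mul_sum]
    exact Finset.sum_congr rfl fun k _ => by rw [hcum]; ring
  set Sb : ℝ → ℝ := fun t => ∑ j, Real.exp (η * (h0 j - t * a j)) with hSb
  have hSbpos : ∀ t, 0 < Sb t := fun t => sum_exp_pos' hm _
  set gb : ℝ → ℝ := fun t => -(1/η) * Real.log (Sb t) with hgb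
  have hSb' : ∀ t, HasDerivAt Sb (∑ j, Real.exp (η * (h0 j - t * a j)) * (η * -(1 * a j))) t := by
    intro t
    apply HasDerivAt.fun_sum
    intro j _
    exact ((((hasDerivAt_id t).mul_const (a j)).const_sub (h0 j)).const_mul η).exp
  have hIb : ∀ t, HasDerivAt gb (∑ i, a i * Real.exp (η * (h0 i - t * a i)) / Sb t) t := by
    intro t
    have h1 : HasDerivAt (fun u => Real.log (Sb u))
        ((∑ j, Real.exp (η * (h0 j - t * a j)) * (η * -(1 * a j))) / Sb t) t :=
      (hSb' t).log (hSbpos t).ne'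
    have h2 := h1.const_mul (-(1/η))
    refine h2.congr_deriv (Eq.symm ?_)
    rw [Finset.sum_div, Finset.mul_sum]
    refine Finset.sum_congr rfl fun j _ => ?_
    field_simp [hη.ne', (hSbpos t).ne']
  have hIcont : Continuous fun t => ∑ i, a i * Real.exp (η * (h0 i - t * a i)) / Sb t := by
    have hc : ∀ j : Fin m, Continuous fun t : ℝ => Real.exp (η * (h0 j - t * a j)) := by
      intro j
      apply Real.continuous_exp.comp
      exact Continuous.mul continuous_const (continuous_const.sub (continuous_id.mul continuous_const))
    have hSbcont : Continuous Sb := continuous_finset_sum _ fun j _ => hc j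
    apply continuous_finset_sum
    intro i _
    exact ((continuous_const.mul (hc i)).div hSbcont fun t => (hSbpos t).ne')
  have hint : ∫ t in (0:ℝ)..T, ∑ i, a i * Real.exp (η * (h0 i - t * a i)) / Sb t
      = gb T - gb 0 :=
    integral_eq_sub_of_hasDerivAt (fun t _ => hIb t) (hIcont.intervalIntegrable _ _)
  have hR : Rcont η A h0 T (fun _ => xs)
      = ∫ t in (0:ℝ)..T, ∑ i, a i * Real.exp (η * (h0 i - t * a i)) / Sb t := by
    unfold Rcont
    apply intervalIntegral.integral_congr
    intro t _
    dsimp only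
    rw [Finset.sum_comm]
    refine Finset.sum_congr rfl fun i _ => ?_
    have hcp : contPlay η A h0 (fun _ => xs) t i
        = Real.exp (η * (h0 i - t * a i)) / Sb t := by
      unfold contPlay
      rw [hsum]
      congr 1
      exact Finset.sum_congr rfl fun j _ => by rw [hsum]
    rw [hcp, ← Finset.sum_mul, mul_div_assoc]
  rw [hR, hint]
  have hSb0 : Sb 0 = ∑ j, Real.exp (η * h0 j) := by
    rw [hSb]; exact Finset.sum_congr rfl fun j _ => by norm_num
  have hSbT : ∑ i, Real.exp (η * (h0 i - T * ∑ k, xs k * A k i)) = Sb T := rfl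
  have e1 : gb T = -(1/η) * Real.log (Sb T) := rfl
  have e2 : gb 0 = -(1/η) * Real.log (∑ j, Real.exp (η * h0 j)) := by
    have : gb 0 = -(1/η) * Real.log (Sb 0) := rfl
    rw [this, hSb0]
  unfold Fclosed
  rw [e1, e2, hSbT]
  ring

/-- the supremum of the continuous-time reward over all measurable
strategies equals the maximum of the closed form over the simplex, and it is attained
by the constant strategy equal to any maximizer. -/
theorem stmt1 {n m : ℕ} (hn : 0 < n) (hm : 0 < m) (η T : ℝ) (hη : 0 < η) (hT : 0 < T)
    (A : Matrix (Fin n) (Fin m) ℝ) (h0 : Fin m → ℝ) :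
    (∃ xs ∈ stdSimplex ℝ (Fin n), ∀ x' ∈ stdSimplex ℝ (Fin n),
        Fclosed η T A h0 x' ≤ Fclosed η T A h0 xs) ∧
    ∀ xs ∈ stdSimplex ℝ (Fin n),
      (∀ x' ∈ stdSimplex ℝ (Fin n), Fclosed η T A h0 x' ≤ Fclosed η T A h0 xs) →
      IsGreatest {r | ∃ x : ℝ → Fin n → ℝ, Measurable x ∧
          (∀ t ∈ Set.Icc (0:ℝ) T, x t ∈ stdSimplex ℝ (Fin n)) ∧ r = Rcont η A h0 T x}
        (Fclosed η T A h0 xs) ∧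
      Rcont η A h0 T (fun _ => xs) = Fclosed η T A h0 xs := by
  obtain ⟨xs0, hxs0, hmax0⟩ := exists_max hn hm η T hη A h0
  refine ⟨⟨xs0, hxs0, hmax0⟩, ?_⟩
  intro xs hxs hmaxxs
  refine ⟨⟨⟨fun _ => xs, measurable_const, fun t _ => hxs,
      (const_strategy hm η T hη A h0 xs).symm⟩, ?_⟩,
    const_strategy hm η T hη A h0 xs⟩
  rintro r ⟨x, hxm, hxsim, rfl⟩
  obtain ⟨z, hz, hle⟩ := upper_bound hm η T hη hT A h0 x hxm hxsim
  exact hle.trans (hmaxxs z hz)
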